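/- Let Ω ⊂ ℝ^m be a bounded domain and u : Ω̄ → ℝ a continuous function with boundary values ψ on ∂Ω, where ψ is 2β-Hölder continuous. Suppose there exist a constant c₀ > 0 and δ₀ > 0 such that for all 0 < δ < δ₀, sup_{Ω_δ}(u_δ − u) ≤ c₀ δ^β, where u_δ(x) = sup_{|ζ|<δ} u(x+ζ) and Ω_δ = {x ∈ Ω : dist(x,∂Ω) > δ}. Then u is β-Hölder continuous on Ω̄, i.e. there is A > 0 with |u(x) − u(y)| ≤ A|x−y|^β for all x, y ∈ Ω̄. -/
import Mathlib

open Set MeasureTheory Metric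

set_option maxHeartbeats 1000000

/-- Interior sup-convolution estimates plus `2β`-Hölder boundary data upgrade to global
`β`-Hölder continuity on `Ω̄`. -/
theorem holder_up_to_boundary
    (m : ℕ) (Ω : Set (EuclideanSpace ℝ (Fin m)))
    (hΩo : IsOpen Ω) (hΩb : Bornology.IsBounded Ω)
    (u ψ : EuclideanSpace ℝ (Fin m) → ℝ)
    (hu : ContinuousOn u (closure Ω))
    (β : ℝ) (hβ0 : 0 < β) (hβ1 : β ≤ 1 / 2)
    -- ψ ∈ Lip_{2β}(∂Ω)
    (hψ : ∃ Cψ : ℝ, 0 ≤ Cψ ∧ ∀ ξ ∈ frontier Ω, ∀ ζ ∈ frontier Ω,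
      |ψ ξ - ψ ζ| ≤ Cψ * dist ξ ζ ^ (2 * β))
    -- u = ψ on ∂Ω
    (hbd : ∀ ξ ∈ frontier Ω, u ξ = ψ ξ)
    -- interior sup-convolution estimate
    (hsc : ∃ c₀ δ₀ : ℝ, 0 < c₀ ∧ 0 < δ₀ ∧ ∀ δ : ℝ, 0 < δ → δ < δ₀ →
      ∀ x ∈ {x ∈ Ω | δ < infDist x Ωᶜ},
        sSup (u '' ball x δ) - u x ≤ c₀ * δ ^ β) :
    ∃ A : ℝ, 0 < A ∧ ∀ x ∈ closure Ω, ∀ y ∈ closure Ω,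
      |u x - u y| ≤ A * dist x y ^ β := by
  obtain ⟨Cψ, hCψ0, hψ'⟩ := hψ
  obtain ⟨c₀, δ₀, hc₀, hδ₀, hsc'⟩ := hsc
  -- trivial case: subsingleton ambient space
  rcases subsingleton_or_nontrivial (EuclideanSpace ℝ (Fin m)) with hss | hnt
  · refine ⟨1, one_pos, ?_⟩
    intro x _ y _
    have hxy : x = y := Subsingleton.elim x y
    subst hxy
    simp [Real.zero_rpow hβ0.ne']
  -- trivial case: empty closure
  rcases (closure Ω).eq_empty_or_nonempty with hemp | hne
  · exact ⟨1, one_pos, by simp [hemp]⟩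
  -- complement is nonempty
  have hcne : Ωᶜ.Nonempty := by
    rcases Set.eq_empty_or_nonempty Ωᶜ with h | h
    · exfalso
      have hΩu : Ω = univ := by
        rw [← compl_compl Ω, h, compl_empty]
      exact NormedSpace.unbounded_univ ℝ (EuclideanSpace ℝ (Fin m)) (hΩu ▸ hΩb)
    · exact h
  have hΩccl : IsClosed Ωᶜ := hΩo.isClosed_compl
  have hmemΩ : ∀ z : EuclideanSpace ℝ (Fin m), 0 < infDist z Ωᶜ → z ∈ Ω := by
    intro z hz
    by_contra hzc
    rw [infDist_zero_of_mem (by simpa using hzc)] at hz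
    exact lt_irrefl 0 hz
  -- global bound on u
  obtain ⟨M, hM⟩ := (hΩb.isCompact_closure).exists_bound_of_continuousOn hu
  have hM0 : 0 ≤ M := le_trans (norm_nonneg _) (hM hne.choose hne.choose_spec)
  have hMabs : ∀ z ∈ closure Ω, |u z| ≤ M := by
    intro z hz; simpa [Real.norm_eq_abs] using hM z hz
  -- diameter bound
  obtain ⟨D, hD⟩ := Metric.isBounded_iff.mp hΩb.closure
  have hD0 : 0 ≤ D := by
    have := hD hne.choose_spec hne.choose_spec
    simpa using this
  -- geometric ratio
  set q : ℝ := (2/3 : ℝ) ^ β with hqdef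
  have hq0 : 0 < q := Real.rpow_pos_of_pos (by norm_num) β
  have hq1 : q < 1 := Real.rpow_lt_one (by norm_num) (by norm_num) hβ0
  set C₁ : ℝ := c₀ / (1 - q) with hC₁def
  clear_value C₁
  have hC₁ : 0 < C₁ := by rw [hC₁def]; exact div_pos hc₀ (by linarith)
  -- one-sided step estimate
  have step : ∀ δ : ℝ, 0 < δ → δ < δ₀ → ∀ x, δ < infDist x Ωᶜ →
      ∀ y, dist x y < δ → u y - u x ≤ c₀ * δ ^ β := by
    intro δ hδ hδ' x hxd y hxy
    have hxΩ : x ∈ Ω := hmemΩ x (lt_trans hδ hxd)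
    have hsub : ball x δ ⊆ Ω := by
      intro z hz
      apply hmemΩ
      have h1 : infDist x Ωᶜ ≤ infDist z Ωᶜ + dist x z := infDist_le_infDist_add_dist
      have h2 : dist x z < δ := by rw [dist_comm]; exact mem_ball.mp hz
      linarith
    have hy : y ∈ ball x δ := mem_ball'.mpr hxy
    have hbdd : BddAbove (u '' ball x δ) := by
      refine ⟨M, ?_⟩
      rintro _ ⟨z, hz, rfl⟩
      exact le_trans (le_abs_self _) (hMabs z (subset_closure (hsub hz)))
    have h1 : u y ≤ sSup (u '' ball x δ) := le_csSup hbdd ⟨y, hy, rfl⟩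
    have h2 := hsc' δ hδ hδ' x ⟨hxΩ, hxd⟩
    linarith
  -- two-sided estimate
  have step2 : ∀ δ : ℝ, 0 < δ → δ < δ₀ → ∀ x y, δ < infDist x Ωᶜ → δ < infDist y Ωᶜ →
      dist x y < δ → |u x - u y| ≤ c₀ * δ ^ β := by
    intro δ h1 h2 x y hx hy hxy
    rw [abs_sub_le_iff]
    exact ⟨step δ h1 h2 y hy x (by rwa [dist_comm]),
           step δ h1 h2 x hx y hxy⟩
  -- boundary estimate
  have bdry : ∀ x ∈ closure Ω, infDist x Ωᶜ < δ₀ →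
      ∃ ξ ∈ frontier Ω, dist x ξ = infDist x Ωᶜ ∧
        |u x - u ξ| ≤ C₁ * infDist x Ωᶜ ^ β := by
    intro x hx hxδ
    rcases eq_or_lt_of_le (infDist_nonneg : (0:ℝ) ≤ infDist x Ωᶜ) with h0 | h0
    · -- x is a boundary point
      have hxc : x ∈ Ωᶜ := (hΩccl.mem_iff_infDist_zero hcne).mpr h0.symm
      have hxf : x ∈ frontier Ω := by
        rw [hΩo.frontier_eq]; exact ⟨hx, hxc⟩
      refine ⟨x, hxf, by rw [dist_self]; exact h0, ?_⟩
      rw [← h0, Real.zero_rpow hβ0.ne', mul_zero]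
      simp
    · -- x interior point, distance d > 0 to the boundary
      obtain ⟨ξ, hξc, hξd⟩ := hΩccl.exists_infDist_eq_dist hcne x
      set d : ℝ := infDist x Ωᶜ with hddef
      clear_value d
      set p : ℕ → EuclideanSpace ℝ (Fin m) := fun k => ξ + ((2/3 : ℝ) ^ k) • (x - ξ)
        with hpdef
      have hp0 : p 0 = x := by simp [hpdef]
      have hnorm : ‖x - ξ‖ = d := by
        rw [← dist_eq_norm]; exact hξd.symm
      have hdist : ∀ k j : ℕ, dist (p k) (p j) = |(2/3:ℝ)^k - (2/3:ℝ)^j| * d := by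
        intro k j
        have hsub : p k - p j = (((2/3:ℝ)^k - (2/3:ℝ)^j)) • (x - ξ) := by
          simp [hpdef, sub_smul]
        rw [dist_eq_norm, hsub, norm_smul, Real.norm_eq_abs, hnorm]
      have hpow1 : ∀ k : ℕ, (2/3:ℝ)^k ≤ 1 := fun k =>
        pow_le_one₀ (by norm_num) (by norm_num)
      have hpow0 : ∀ k : ℕ, (0:ℝ) < (2/3:ℝ)^k := fun k => pow_pos (by norm_num) k
      have hpd : ∀ k : ℕ, (2/3:ℝ)^k * d ≤ infDist (p k) Ωᶜ := by
        intro k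
        have h1 : infDist x Ωᶜ ≤ infDist (p k) Ωᶜ + dist x (p k) := infDist_le_infDist_add_dist
        have h2 : dist x (p k) = (1 - (2/3:ℝ)^k) * d := by
          rw [← hp0, dist_comm]
          rw [hdist k 0]
          rw [pow_zero, abs_of_nonpos (by linarith [hpow1 k])]
          ring_nf
        rw [h2] at h1
        nlinarith
      have hpΩ : ∀ k, p k ∈ Ω := fun k =>
        hmemΩ _ (lt_of_lt_of_le (by positivity) (hpd k))
      -- step between consecutive points
      have hstepk : ∀ k : ℕ, |u (p k) - u (p (k+1))| ≤ (c₀ * (d/2) ^ β) * q ^ k := by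
        intro k
        set δk : ℝ := (2/3:ℝ)^k * d / 2 with hδkdef
        clear_value δk
        have hδk0 : 0 < δk := by
          rw [hδkdef]; exact div_pos (mul_pos (hpow0 k) h0) two_pos
        have hδkδ₀ : δk < δ₀ := by
          have : δk ≤ d / 2 := by
            rw [hδkdef]
            have := hpow1 k
            nlinarith
          linarith
        have hdk : dist (p k) (p (k+1)) = (2/3:ℝ)^k * d / 3 := by
          rw [hdist k (k+1), pow_succ]
          rw [abs_of_nonneg (by nlinarith [hpow0 k])]
          ring
        have hclose : dist (p k) (p (k+1)) < δk := by
          rw [hdk, hδkdef]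
          nlinarith [hpow0 k]
        have hdepth1 : δk < infDist (p k) Ωᶜ := by
          have := hpd k
          rw [hδkdef]
          nlinarith [hpow0 k]
        have hdepth2 : δk < infDist (p (k+1)) Ωᶜ := by
          have := hpd (k+1)
          rw [pow_succ] at this
          rw [hδkdef]
          nlinarith [hpow0 k]
        have := step2 δk hδk0 hδkδ₀ (p k) (p (k+1)) hdepth1 hdepth2 hclose
        have heq : c₀ * δk ^ β = (c₀ * (d/2) ^ β) * q ^ k := by
          have h1 : δk = (2/3:ℝ)^k * (d/2) := by rw [hδkdef]; ring
          rw [h1, Real.mul_rpow (le_of_lt (hpow0 k)) (by positivity)]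
          have h2 : ((2/3:ℝ)^k) ^ β = q ^ k := by
            rw [← Real.rpow_natCast (2/3:ℝ) k, ← Real.rpow_natCast q k, hqdef,
              ← Real.rpow_mul (by norm_num), ← Real.rpow_mul (by norm_num), mul_comm]
          rw [h2]; ring
        linarith [heq ▸ this]
      -- telescoping
      have hgeom : ∀ K : ℕ, (∑ i ∈ Finset.range K, q ^ i) ≤ 1 / (1 - q) := by
        intro K
        rw [geom_sum_eq hq1.ne K]
        have e : (q ^ K - 1) / (q - 1) = (1 - q ^ K) / (1 - q) := by
          rw [← neg_div_neg_eq]; ring_nf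
        rw [e, div_le_div_iff₀ (by linarith) (by linarith)]
        have : (0:ℝ) ≤ q ^ K := le_of_lt (pow_pos hq0 K)
        nlinarith
      have htel : ∀ K : ℕ, dist (u x) (u (p K)) ≤ C₁ * d ^ β := by
        intro K
        have h1 : dist (u (p 0)) (u (p K)) ≤
            ∑ i ∈ Finset.range K, dist (u (p i)) (u (p (i+1))) :=
          dist_le_range_sum_dist (fun k => u (p k)) K
        have h2 : ∑ i ∈ Finset.range K, dist (u (p i)) (u (p (i+1))) ≤
            ∑ i ∈ Finset.range K, (c₀ * (d/2) ^ β) * q ^ i := by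
          apply Finset.sum_le_sum
          intro i _
          rw [Real.dist_eq]
          exact hstepk i
        have h3 : ∑ i ∈ Finset.range K, (c₀ * (d/2) ^ β) * q ^ i =
            (c₀ * (d/2) ^ β) * ∑ i ∈ Finset.range K, q ^ i := by
          rw [Finset.mul_sum]
        have h4 : (c₀ * (d/2) ^ β) * ∑ i ∈ Finset.range K, q ^ i ≤
            (c₀ * (d/2) ^ β) * (1 / (1 - q)) := by
          apply mul_le_mul_of_nonneg_left (hgeom K) (by positivity)
        have h5 : (d/2) ^ β ≤ d ^ β :=
          Real.rpow_le_rpow (by positivity) (by linarith) hβ0.le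
        have h6 : (c₀ * (d/2) ^ β) * (1 / (1 - q)) ≤ C₁ * d ^ β := by
          have h7 : c₀ * (d/2) ^ β ≤ c₀ * d ^ β := mul_le_mul_of_nonneg_left h5 hc₀.le
          have h8 : (c₀ * (d/2) ^ β) * (1 / (1 - q)) ≤ (c₀ * d ^ β) * (1 / (1 - q)) :=
            mul_le_mul_of_nonneg_right h7 (le_of_lt (one_div_pos.mpr (by linarith)))
          have h9 : (c₀ * d ^ β) * (1 / (1 - q)) = C₁ * d ^ β := by
            rw [hC₁def]; ring
          linarith
        rw [← hp0]
        linarith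
      -- pass to the limit
      have h23 : Filter.Tendsto (fun k : ℕ => ((2/3:ℝ)^k)) Filter.atTop (nhds 0) :=
        tendsto_pow_atTop_nhds_zero_of_lt_one (by norm_num) (by norm_num)
      have hptend : Filter.Tendsto p Filter.atTop (nhds ξ) := by
        have := (h23.smul_const (x - ξ)).const_add ξ
        simpa [hpdef] using this
      have hξcl : ξ ∈ closure Ω :=
        mem_closure_of_tendsto hptend (Filter.Eventually.of_forall hpΩ)
      have hξf : ξ ∈ frontier Ω := by
        rw [hΩo.frontier_eq]; exact ⟨hξcl, hξc⟩
      have hutend : Filter.Tendsto (fun k => u (p k)) Filter.atTop (nhds (u ξ)) := by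
        have hcw : ContinuousWithinAt u (closure Ω) ξ := hu ξ hξcl
        exact hcw.tendsto.comp
          (tendsto_nhdsWithin_of_tendsto_nhds_of_eventually_within p hptend
            (Filter.Eventually.of_forall (fun k => subset_closure (hpΩ k))))
      have hlim : dist (u x) (u ξ) ≤ C₁ * d ^ β := by
        apply le_of_tendsto (Filter.Tendsto.dist tendsto_const_nhds hutend)
        exact Filter.Eventually.of_forall htel
      exact ⟨ξ, hξf, hξd.symm, by rwa [← Real.dist_eq]⟩
  -- main constant
  set A : ℝ := 2*M/((δ₀/3) ^ β) + 2*c₀ + 5*C₁ + 6*Cψ*(D+1) ^ β + 1 with hAdef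
  clear_value A
  have hδ₀β : (0:ℝ) < (δ₀/3) ^ β := Real.rpow_pos_of_pos (by linarith) β
  have hDβ : (0:ℝ) < (D+1) ^ β := Real.rpow_pos_of_pos (by linarith) β
  have hA1 : (0:ℝ) ≤ 2*M/((δ₀/3) ^ β) := by positivity
  have hA2 : (0:ℝ) ≤ 6*Cψ*(D+1) ^ β := by positivity
  have hApos : 0 < A := by rw [hAdef]; nlinarith
  refine ⟨A, hApos, ?_⟩
  have key : ∀ x ∈ closure Ω, ∀ y ∈ closure Ω, infDist x Ωᶜ ≤ infDist y Ωᶜ →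
      |u x - u y| ≤ A * dist x y ^ β := by
    intro x hx y hy hxyd
    set r : ℝ := dist x y with hrdef
    clear_value r
    have hr0 : 0 ≤ r := by rw [hrdef]; exact dist_nonneg
    rcases eq_or_lt_of_le hr0 with h0 | h0
    · have hxy : x = y := by rw [← dist_eq_zero, ← hrdef]; exact h0.symm
      rw [hxy, sub_self, abs_zero]
      positivity
    have hrβ : 0 < r ^ β := Real.rpow_pos_of_pos h0 β
    rcases le_or_gt (δ₀/3) r with hbig | hsmall
    · -- large distance: use boundedness
      have hux := hMabs x hx
      have huy := hMabs y hy
      have h1 : |u x - u y| ≤ 2*M := by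
        rw [abs_le] at hux huy ⊢
        constructor <;> linarith [hux.1, hux.2, huy.1, huy.2]
      have h2 : (δ₀/3) ^ β ≤ r ^ β := Real.rpow_le_rpow (by positivity) hbig hβ0.le
      have h3 : 2*M ≤ (2*M/((δ₀/3) ^ β)) * r ^ β := by
        have h4 : (2*M/((δ₀/3) ^ β)) * ((δ₀/3) ^ β) ≤ (2*M/((δ₀/3) ^ β)) * r ^ β :=
          mul_le_mul_of_nonneg_left h2 (by positivity)
        rwa [div_mul_cancel₀ _ hδ₀β.ne'] at h4
      have h5 : (2*M/((δ₀/3) ^ β)) * r ^ β ≤ A * r ^ β := by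
        apply mul_le_mul_of_nonneg_right _ hrβ.le
        rw [hAdef]; nlinarith
      linarith
    · -- small distance
      have hdx0 : (0:ℝ) ≤ infDist x Ωᶜ := infDist_nonneg
      rcases le_or_gt (2*r) (infDist x Ωᶜ) with hdeep | hshallow
      · -- interior case
        have hδ : (0:ℝ) < (3/2)*r := by linarith
        have h1 := step2 ((3/2)*r) hδ (by linarith) x y
          (by linarith) (by linarith) (by rw [← hrdef]; linarith)
        have h2 : ((3/2)*r) ^ β = (3/2:ℝ) ^ β * r ^ β :=
          Real.mul_rpow (by norm_num) hr0
        have h3 : (3/2:ℝ) ^ β ≤ 2 := by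
          calc (3/2:ℝ) ^ β ≤ (3/2:ℝ) ^ (1:ℝ) :=
                Real.rpow_le_rpow_of_exponent_le (by norm_num) (by linarith)
            _ = 3/2 := Real.rpow_one _
            _ ≤ 2 := by norm_num
        have h4 : c₀ * ((3/2)*r) ^ β ≤ 2*c₀ * r ^ β := by
          rw [h2]
          have h4a : (3/2:ℝ) ^ β * r ^ β ≤ 2 * r ^ β :=
            mul_le_mul_of_nonneg_right h3 hrβ.le
          have h4b := mul_le_mul_of_nonneg_left h4a hc₀.le
          linarith
        have h5 : 2*c₀ * r ^ β ≤ A * r ^ β := by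
          apply mul_le_mul_of_nonneg_right _ hrβ.le
          rw [hAdef]; nlinarith
        linarith
      · -- near-boundary case
        have hdyx : infDist y Ωᶜ ≤ infDist x Ωᶜ + r := by
          have h1 : infDist y Ωᶜ ≤ infDist x Ωᶜ + dist y x := infDist_le_infDist_add_dist
          rwa [dist_comm y x, ← hrdef] at h1
        have hdxδ : infDist x Ωᶜ < δ₀ := by linarith
        have hdyδ : infDist y Ωᶜ < δ₀ := by linarith
        obtain ⟨ξx, hξxf, hξxd, hξxu⟩ := bdry x hx hdxδ
        obtain ⟨ξy, hξyf, hξyd, hξyu⟩ := bdry y hy hdyδ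
        have hψmid := hψ' ξx hξxf ξy hξyf
        -- distances between boundary points
        have hξξ : dist ξx ξy ≤ 6*r := by
          have h1 : dist ξx ξy ≤ dist ξx x + dist x y + dist y ξy :=
            dist_triangle4 ξx x y ξy
          rw [dist_comm ξx x, hξxd, hξyd, ← hrdef] at h1
          linarith
        -- bound for the ψ term
        have hrD : r ≤ D + 1 := by
          have := hD hx hy
          rw [← hrdef] at this; linarith
        have hψbd : |ψ ξx - ψ ξy| ≤ 6*Cψ*(D+1) ^ β * r ^ β := by
          have h1 : dist ξx ξy ^ (2*β) ≤ (6*r) ^ (2*β) :=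
            Real.rpow_le_rpow dist_nonneg hξξ (by linarith)
          have h2 : ((6:ℝ)*r) ^ (2*β) = (6:ℝ) ^ (2*β) * r ^ (2*β) :=
            Real.mul_rpow (by norm_num) hr0
          have h3 : (6:ℝ) ^ (2*β) ≤ 6 := by
            calc (6:ℝ) ^ (2*β) ≤ (6:ℝ) ^ (1:ℝ) :=
                  Real.rpow_le_rpow_of_exponent_le (by norm_num) (by linarith)
              _ = 6 := Real.rpow_one _
          have h4 : r ^ (2*β) = r ^ β * r ^ β := by
            rw [two_mul, Real.rpow_add h0]
          have h5 : r ^ β ≤ (D+1) ^ β :=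
            Real.rpow_le_rpow hr0 hrD hβ0.le
          have h6 : r ^ (2*β) ≤ (D+1) ^ β * r ^ β := by
            rw [h4]
            exact mul_le_mul_of_nonneg_right h5 hrβ.le
          have h7 : Cψ * dist ξx ξy ^ (2*β) ≤ Cψ * ((6:ℝ) ^ (2*β) * r ^ (2*β)) := by
            apply mul_le_mul_of_nonneg_left _ hCψ0
            rw [← h2]; exact h1
          have h8 : Cψ * ((6:ℝ) ^ (2*β) * r ^ (2*β)) ≤ 6*Cψ*((D+1) ^ β * r ^ β) := by
            have hr2β : (0:ℝ) ≤ r ^ (2*β) := Real.rpow_nonneg hr0 _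
            have e1 : Cψ * ((6:ℝ) ^ (2*β) * r ^ (2*β)) = (Cψ * r ^ (2*β)) * (6:ℝ) ^ (2*β) := by
              ring
            have e2 : (Cψ * r ^ (2*β)) * (6:ℝ) ^ (2*β) ≤ (Cψ * r ^ (2*β)) * 6 :=
              mul_le_mul_of_nonneg_left h3 (mul_nonneg hCψ0 hr2β)
            have e4 : 6*Cψ*(r ^ (2*β)) ≤ 6*Cψ*((D+1) ^ β * r ^ β) :=
              mul_le_mul_of_nonneg_left h6 (by linarith)
            linarith
          calc |ψ ξx - ψ ξy| ≤ Cψ * dist ξx ξy ^ (2*β) := hψmid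
            _ ≤ Cψ * ((6:ℝ) ^ (2*β) * r ^ (2*β)) := h7
            _ ≤ 6*Cψ*((D+1) ^ β * r ^ β) := h8
            _ = 6*Cψ*(D+1) ^ β * r ^ β := by ring
        -- bounds for the two distance-to-boundary terms
        have hdxr : infDist x Ωᶜ ^ β ≤ 2 * r ^ β := by
          calc infDist x Ωᶜ ^ β ≤ (2*r) ^ β :=
                Real.rpow_le_rpow hdx0 (by linarith) hβ0.le
            _ = (2:ℝ) ^ β * r ^ β := Real.mul_rpow (by norm_num) hr0
            _ ≤ 2 * r ^ β := by
                have : (2:ℝ) ^ β ≤ 2 := by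
                  calc (2:ℝ) ^ β ≤ (2:ℝ) ^ (1:ℝ) :=
                        Real.rpow_le_rpow_of_exponent_le (by norm_num) (by linarith)
                    _ = 2 := Real.rpow_one _
                exact mul_le_mul_of_nonneg_right this hrβ.le
        have hdyr : infDist y Ωᶜ ^ β ≤ 3 * r ^ β := by
          calc infDist y Ωᶜ ^ β ≤ (3*r) ^ β :=
                Real.rpow_le_rpow infDist_nonneg (by linarith) hβ0.le
            _ = (3:ℝ) ^ β * r ^ β := Real.mul_rpow (by norm_num) hr0
            _ ≤ 3 * r ^ β := by
                have : (3:ℝ) ^ β ≤ 3 := by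
                  calc (3:ℝ) ^ β ≤ (3:ℝ) ^ (1:ℝ) :=
                        Real.rpow_le_rpow_of_exponent_le (by norm_num) (by linarith)
                    _ = 3 := Real.rpow_one _
                exact mul_le_mul_of_nonneg_right this hrβ.le
        -- combine
        have hchain : |u x - u y| ≤ |u x - u ξx| + |ψ ξx - ψ ξy| + |u ξy - u y| := by
          have h1 : |u x - u y| ≤ |u x - u ξx| + |u ξx - u y| := abs_sub_le _ _ _
          have h2 : |u ξx - u y| ≤ |u ξx - u ξy| + |u ξy - u y| := abs_sub_le _ _ _
          have h3 : u ξx = ψ ξx := hbd ξx hξxf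
          have h4 : u ξy = ψ ξy := hbd ξy hξyf
          rw [h3, h4] at h2
          rw [h3] at h1
          rw [h3, h4]
          linarith
        have ht1 : |u x - u ξx| ≤ C₁ * (2 * r ^ β) :=
          le_trans hξxu (mul_le_mul_of_nonneg_left hdxr hC₁.le)
        have ht2 : |u ξy - u y| ≤ C₁ * (3 * r ^ β) := by
          rw [abs_sub_comm]
          exact le_trans hξyu (mul_le_mul_of_nonneg_left hdyr hC₁.le)
        have hfin : C₁ * (2 * r ^ β) + 6*Cψ*(D+1) ^ β * r ^ β + C₁ * (3 * r ^ β)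
            ≤ A * r ^ β := by
          have : A * r ^ β = (2*M/((δ₀/3) ^ β)) * r ^ β + 2*c₀ * r ^ β + 5*C₁ * r ^ β
              + 6*Cψ*(D+1) ^ β * r ^ β + r ^ β := by
            rw [hAdef]; ring
          rw [this]
          nlinarith
        linarith
  intro x hx y hy
  rcases le_total (infDist x Ωᶜ) (infDist y Ωᶜ) with h | h
  · exact key x hx y hy h
  · rw [abs_sub_comm, dist_comm]
    exact key y hy x hx h
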